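/- For every ξ ∈ ℂ and w ∈ ℂ∖{0}, one has G(ξ,w) = 0 if and only if there exists k ∈ ℤ with w = exp(iξ + 2πk). That is, the zero set of Stein's function F⁺ in the variable ξ = log z is exactly the divisor D⁺ : w = e^{i log z}, counted over all branches of log z. -/

import Mathlib

open Complex

lemma tprod_eq_zero_of_eq_zero {f : ℕ → ℂ} (k : ℕ) (h : f k = 0) : ∏' n, f n = 0 := by
  have : HasProd f 0 := by
    apply Filter.Tendsto.congr' _ tendsto_const_nhds
    filter_upwards [Filter.eventually_ge_atTop ({k} : Finset ℕ)] with s hs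
    exact (Finset.prod_eq_zero (Finset.singleton_subset_iff.mp hs) h).symm
  exact this.tprod_eq

lemma norm_exp_neg_two_pi_lt_one : ‖Complex.exp (-(2*(Real.pi:ℂ)))‖ < 1 := by
  rw [Complex.norm_exp]
  simp [Real.exp_lt_one_iff, Real.pi_pos]

lemma summable_aux (c : ℂ) : Summable (fun n : ℕ => c * Complex.exp (-(2*(Real.pi:ℂ)) * n)) := by
  have := (summable_geometric_of_norm_lt_one norm_exp_neg_two_pi_lt_one).mul_left c
  refine this.congr fun n => ?_
  rw [← Complex.exp_nat_mul, mul_comm (n:ℂ)]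

lemma tprod_one_sub_ne_zero {f : ℕ → ℂ} (hs : Summable f) (h : ∀ n, 1 - f n ≠ 0) :
    ∏' n, (1 - f n) ≠ 0 := by
  have hl : Summable fun n => Complex.log (1 - f n) := hs.clog_one_sub
  have H := hl.hasSum.cexp.tprod_eq
  have : ∏' n, (1 - f n) = Complex.exp (∑' n, Complex.log (1 - f n)) := by
    rw [← H]
    exact tprod_congr fun n => (Complex.exp_log (h n)).symm
  rw [this]
  exact Complex.exp_ne_zero _

/-- Stein's function `F⁺(z,w)` written in the variable `ξ = log z`. -/
noncomputable def steinG (ξ w : ℂ) : ℂ :=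
  Complex.exp (ξ ^ 2 / (4 * Real.pi) + ξ / (1 - Complex.I)) *
    (∏' ν : ℕ, (1 - w * Complex.exp (-Complex.I * ξ - 2 * Real.pi * ν))) *
    (∏' μ : ℕ, (1 - w⁻¹ * Complex.exp (Complex.I * ξ - 2 * Real.pi * (μ + 1))))

/-- The zero set of Stein's function `G(ξ,w)` is exactly the divisor
`D⁺ : w = e^{iξ + 2πk}`, over all branches of `log z`. -/
theorem steinG_zero_iff (ξ w : ℂ) (hw : w ≠ 0) :
    steinG ξ w = 0 ↔ ∃ k : ℤ, w = Complex.exp (Complex.I * ξ + 2 * Real.pi * k) := by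
  set fA : ℕ → ℂ := fun ν => w * Complex.exp (-Complex.I * ξ - 2 * Real.pi * ν) with hfA
  set fB : ℕ → ℂ := fun μ => w⁻¹ * Complex.exp (Complex.I * ξ - 2 * Real.pi * (μ + 1)) with hfB
  have hsA : Summable fA := by
    refine (summable_aux (w * Complex.exp (-Complex.I * ξ))).congr fun n => ?_
    rw [hfA, mul_assoc, ← Complex.exp_add]
    exact congrArg (w * Complex.exp ·) (by ring)
  have hsB : Summable fB := by
    refine (summable_aux (w⁻¹ * Complex.exp (Complex.I * ξ - 2 * Real.pi))).congr fun n => ?_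
    rw [hfB, mul_assoc, ← Complex.exp_add]
    exact congrArg (w⁻¹ * Complex.exp ·) (by ring)
  constructor
  · intro h
    by_contra hk
    push_neg at hk
    have hA1 : ∀ ν, 1 - fA ν ≠ 0 := by
      intro ν h0
      refine hk ν ?_
      have h1 : w * Complex.exp (-Complex.I * ξ - 2 * Real.pi * ν) = 1 := by
        have := sub_eq_zero.mp h0
        linear_combination -this
      have h2 : Complex.exp (Complex.I * ξ + 2 * Real.pi * (ν : ℤ)) *
          Complex.exp (-Complex.I * ξ - 2 * Real.pi * ν) = 1 := by
        rw [← Complex.exp_add, show Complex.I * ξ + 2 * Real.pi * ((ν : ℤ) : ℂ) +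
          (-Complex.I * ξ - 2 * Real.pi * ν) = 0 by push_cast; ring, Complex.exp_zero]
      exact mul_right_cancel₀ (Complex.exp_ne_zero _) (h1.trans h2.symm)
    have hB1 : ∀ μ, 1 - fB μ ≠ 0 := by
      intro μ h0
      refine hk (-(μ : ℤ) - 1) ?_
      have h1 : w⁻¹ * Complex.exp (Complex.I * ξ - 2 * Real.pi * (μ + 1)) = 1 := by
        have := sub_eq_zero.mp h0
        linear_combination -this
      have h2 : Complex.exp (Complex.I * ξ - 2 * Real.pi * (μ + 1)) = w :=
        ((inv_mul_eq_one₀ hw).mp h1).symm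
      rw [← h2]
      exact congrArg Complex.exp (by push_cast; ring)
    have hA : ∏' ν, (1 - fA ν) ≠ 0 := tprod_one_sub_ne_zero hsA hA1
    have hB : ∏' μ, (1 - fB μ) ≠ 0 := tprod_one_sub_ne_zero hsB hB1
    rw [steinG] at h
    rcases mul_eq_zero.mp h with h' | h'
    · rcases mul_eq_zero.mp h' with h'' | h''
      · exact Complex.exp_ne_zero _ h''
      · exact hA h''
    · exact hB h'
  · rintro ⟨k, rfl⟩
    rw [steinG]
    rcases le_or_gt 0 k with hk | hk
    · have hc : ((k.toNat : ℕ) : ℂ) = (k : ℂ) := by exact_mod_cast Int.toNat_of_nonneg hk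
      have hz : 1 - Complex.exp (Complex.I * ξ + 2 * Real.pi * k) *
          Complex.exp (-Complex.I * ξ - 2 * Real.pi * (k.toNat : ℕ)) = 0 := by
        rw [← Complex.exp_add, show Complex.I * ξ + 2 * Real.pi * k +
          (-Complex.I * ξ - 2 * Real.pi * ((k.toNat : ℕ) : ℂ)) = 0 by
            rw [hc]; ring, Complex.exp_zero, sub_self]
      have hP : (∏' ν : ℕ, (1 - Complex.exp (Complex.I * ξ + 2 * Real.pi * k) *
          Complex.exp (-Complex.I * ξ - 2 * Real.pi * ν))) = 0 :=
        tprod_eq_zero_of_eq_zero k.toNat hz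
      rw [hP, mul_zero, zero_mul]
    · have hn : (0:ℤ) ≤ -k - 1 := by omega
      have hc : (((-k - 1).toNat : ℕ) : ℂ) = -(k : ℂ) - 1 := by
        exact_mod_cast Int.toNat_of_nonneg hn
      have hz : 1 - (Complex.exp (Complex.I * ξ + 2 * Real.pi * k))⁻¹ *
          Complex.exp (Complex.I * ξ - 2 * Real.pi * (((-k - 1).toNat : ℕ) + 1)) = 0 := by
        rw [← Complex.exp_neg, ← Complex.exp_add, show -(Complex.I * ξ + 2 * Real.pi * k) +
          (Complex.I * ξ - 2 * Real.pi * ((((-k - 1).toNat : ℕ) : ℂ) + 1)) = 0 by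
            rw [hc]; ring, Complex.exp_zero, sub_self]
      have hP : (∏' μ : ℕ, (1 - (Complex.exp (Complex.I * ξ + 2 * Real.pi * k))⁻¹ *
          Complex.exp (Complex.I * ξ - 2 * Real.pi * (μ + 1)))) = 0 :=
        tprod_eq_zero_of_eq_zero (-k - 1).toNat hz
      rw [hP, mul_zero]
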